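/- Let (g,J) be a Lie algebra with integrable complex structure, (E,I) a real vector space with complex structure and ρ : g → End(E) a representation. Form the semidirect product Lie algebra E ⋊ g with bracket [(v,x),(w,y)] = (ρ(x)w − ρ(y)v, [x,y]) and almost complex structure K = I × J. Then K is integrable (the Nijenhuis tensor of K vanishes on E ⋊ g) if and only if ρ is an integrable representation, i.e. [I, ρ(Jx)] + I[ρ(x),I] = 0 for all x ∈ g. -/

import Mathlib

attribute [local instance 100] LieRing.ofAssociativeRing

/-- The bracket of the semidirect product Lie algebra `E ⋊ g` attached to a
representation `ρ : g → End(E)` (with `E` abelian):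
`[(v,x),(w,y)] = (ρ(x)w − ρ(y)v, [x,y])`. -/
def sdBracket {g E : Type} [LieRing g] [LieAlgebra ℝ g]
    [AddCommGroup E] [Module ℝ E] (ρ : g →ₗ⁅ℝ⁆ Module.End ℝ E) :
    E × g → E × g → E × g :=
  fun a b => (ρ a.2 b.1 - ρ b.2 a.1, ⁅a.2, b.2⁆)

/-- Nijenhuis tensor of an endomorphism `K` with respect to a bracket `br`:
`N_K(a,b) = br a b − br (Ka) (Kb) + K (br (Ka) b) + K (br a (Kb))`. -/
def nijOf {X : Type} [AddCommGroup X] (br : X → X → X) (K : X → X) :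
    X → X → X :=
  fun a b => br a b - br (K a) (K b) + K (br (K a) b) + K (br a (K b))

/-- Let `(g,J)` be a Lie algebra with integrable complex structure,
`(E,I)` a vector space with complex structure and `ρ : g → End(E)` a
representation.  Then the almost complex structure `K = I × J` on the
semidirect product `E ⋊ g` is integrable (its Nijenhuis tensor vanishes) if
and only if `ρ` is integrable, i.e. `[I, ρ(Jx)] + I∘[ρ(x), I] = 0` for all
`x ∈ g`. -/
theorem semidirect_K_integrable_iff_rep_integrable
    (g E : Type) [LieRing g] [LieAlgebra ℝ g]
    [AddCommGroup E] [Module ℝ E]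
    (J : g →ₗ[ℝ] g) (hJ : ∀ x : g, J (J x) = -x)
    (hNij : ∀ x y : g, ⁅x, y⁆ - ⁅J x, J y⁆ + J ⁅J x, y⁆ + J ⁅x, J y⁆ = 0)
    (I : Module.End ℝ E) (hI : ∀ v : E, I (I v) = -v)
    (ρ : g →ₗ⁅ℝ⁆ Module.End ℝ E) :
    (∀ a b : E × g, nijOf (sdBracket ρ) (fun c => (I c.1, J c.2)) a b = 0) ↔
    (∀ x : g, ⁅I, ρ (J x)⁆ + I * ⁅ρ x, I⁆ = 0) := by
  constructor
  · intro h x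
    ext w
    have h1 := h (0, x) (w, 0)
    simp [nijOf, sdBracket, Prod.ext_iff] at h1
    simp only [Ring.lie_def, Module.End.mul_apply, LinearMap.add_apply, LinearMap.sub_apply,
      LinearMap.zero_apply, map_sub, hI]
    have key : I ((ρ (J x)) w) - (ρ (J x)) (I w) + (I ((ρ x) (I w)) - -(ρ x) w) =
        (ρ x) w - (ρ (J x)) (I w) + I ((ρ (J x)) w) + I ((ρ x) (I w)) := by abel
    rw [key, h1]
  · intro h a b
    obtain ⟨v, x⟩ := a
    obtain ⟨w, y⟩ := b
    have hx := congrFun (congrArg DFunLike.coe (h x)) w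
    have hy := congrFun (congrArg DFunLike.coe (h y)) v
    simp only [Ring.lie_def, Module.End.mul_apply, LinearMap.add_apply, LinearMap.sub_apply,
      LinearMap.zero_apply, map_sub, hI] at hx hy
    simp [nijOf, sdBracket, Prod.ext_iff, hNij]
    have key : (ρ x) w - (ρ y) v - ((ρ (J x)) (I w) - (ρ (J y)) (I v)) +
          (I ((ρ (J x)) w) - I ((ρ y) (I v))) + (I ((ρ x) (I w)) - I ((ρ (J y)) v)) =
        (I ((ρ (J x)) w) - (ρ (J x)) (I w) + (I ((ρ x) (I w)) - -(ρ x) w)) -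
        (I ((ρ (J y)) v) - (ρ (J y)) (I v) + (I ((ρ y) (I v)) - -(ρ y) v)) := by abel
    rw [key, hx, hy, sub_zero]
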